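/- Let ζ : (0, 9/8] → ℝ be continuous at s = 1, and suppose that on (1/2, 1) ∪ (1, 9/8) the function s ↦ (s⁻²−1)⁻¹·ζ(s) is differentiable with derivative equal to (s⁻²−1)⁻²·(2s⁻³ − 5s⁻⁶ − (1/2)·s²⁷). Then ζ(1) = −7/4. -/

import Mathlib

open Topology Filter

/-- Smooth part of the antiderivative. -/
noncomputable def Gsmooth (s : ℝ) : ℝ :=
  (-7/2)*s^2 + (-13/8)*s^4 + (-1)*s^6 + (-11/16)*s^8 + (-1/2)*s^10 + (-3/8)*s^12 +
  (-2/7)*s^14 + (-7/32)*s^16 + (-1/6)*s^18 + (-1/8)*s^20 + (-1/11)*s^22 + (-1/16)*s^24 +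
  (-1/26)*s^26 + (-1/56)*s^28 + 5*s⁻¹ + (13/8)*(1+s)⁻¹ - (15/2)*Real.log (1+s)

/-- Full antiderivative. -/
noncomputable def Gfull (s : ℝ) : ℝ := Gsmooth s - (7/8)*(1-s)⁻¹

lemma hasDerivAt_Gsmooth {s : ℝ} (hs0 : s ≠ 0) (hsp : (1:ℝ) + s ≠ 0) :
    HasDerivAt Gsmooth
      ((-7)*s + (-13/2)*s^3 + (-6)*s^5 + (-11/2)*s^7 + (-5)*s^9 + (-9/2)*s^11 + (-4)*s^13 +
       (-7/2)*s^15 + (-3)*s^17 + (-5/2)*s^19 + (-2)*s^21 + (-3/2)*s^23 + (-1)*s^25 +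
       (-1/2)*s^27 + 5*(-(s^2)⁻¹) + (13/8)*(-1/(1+s)^2) - (15/2)*(1/(1+s))) s := by
  have hpoly := (((((((((((((((hasDerivAt_pow 2 s).const_mul ((-7/2):ℝ)).add ((hasDerivAt_pow 4 s).const_mul ((-13/8):ℝ))).add ((hasDerivAt_pow 6 s).const_mul ((-1):ℝ))).add ((hasDerivAt_pow 8 s).const_mul ((-11/16):ℝ))).add ((hasDerivAt_pow 10 s).const_mul ((-1/2):ℝ))).add ((hasDerivAt_pow 12 s).const_mul ((-3/8):ℝ))).add ((hasDerivAt_pow 14 s).const_mul ((-2/7):ℝ))).add ((hasDerivAt_pow 16 s).const_mul ((-7/32):ℝ))).add ((hasDerivAt_pow 18 s).const_mul ((-1/6):ℝ))).add ((hasDerivAt_pow 20 s).const_mul ((-1/8):ℝ))).add ((hasDerivAt_pow 22 s).const_mul ((-1/11):ℝ))).add ((hasDerivAt_pow 24 s).const_mul ((-1/16):ℝ))).add ((hasDerivAt_pow 26 s).const_mul ((-1/26):ℝ))).add ((hasDerivAt_pow 28 s).const_mul ((-1/56):ℝ)))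
  have hinv := (hasDerivAt_inv hs0).const_mul (5:ℝ)
  have h1p : HasDerivAt (fun x : ℝ => 1 + x) 1 s := by
    simpa using (hasDerivAt_id s).const_add (1:ℝ)
  have hinvp := (h1p.inv hsp).const_mul ((13/8):ℝ)
  have hlog := (h1p.log hsp).const_mul ((15/2):ℝ)
  have := (((hpoly.add hinv).add hinvp).sub hlog)
  refine this.congr_deriv ?_
  push_cast
  ring

lemma hasDerivAt_Gfull {s : ℝ} (hs0 : s ≠ 0) (hs1 : (1:ℝ) - s ≠ 0) (hsp : (1:ℝ) + s ≠ 0)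
    (he : ((s^2)⁻¹ - 1) ≠ 0) :
    HasDerivAt Gfull ((((s^2)⁻¹ - 1)^2)⁻¹ * (2 * (s^3)⁻¹ - 5 * (s^6)⁻¹ - (1/2) * s^27)) s := by
  have h1m : HasDerivAt (fun x : ℝ => 1 - x) (-1) s := by
    simpa using (hasDerivAt_id s).const_sub (1:ℝ)
  have hinv := (h1m.inv hs1).const_mul ((7/8):ℝ)
  have h := (hasDerivAt_Gsmooth hs0 hsp).sub hinv
  refine h.congr_deriv ?_
  have hs2 : (s^2) ≠ 0 := pow_ne_zero _ hs0
  rw [show ((s^2)⁻¹ - 1) = (1-s)*(1+s)/s^2 by field_simp; ring]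
  field_simp
  ring

theorem stmt_3
    (ζ : ℝ → ℝ)
    (hcont : ContinuousAt ζ 1)
    (hode : ∀ s ∈ Set.Ioo (1/2 : ℝ) 1 ∪ Set.Ioo (1:ℝ) (9/8),
      HasDerivAt (fun s : ℝ => ((s^2)⁻¹ - 1)⁻¹ * ζ s)
        ((((s^2)⁻¹ - 1)^2)⁻¹ * (2 * (s^3)⁻¹ - 5 * (s^6)⁻¹ - (1/2) * s^27)) s) :
    ζ 1 = -7/4 := by
  set I : Set ℝ := Set.Ioo (1/2 : ℝ) 1 with hI
  -- basic facts on I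
  have hfacts : ∀ s ∈ I, s ≠ 0 ∧ (1:ℝ) - s ≠ 0 ∧ (1:ℝ) + s ≠ 0 ∧ ((s^2)⁻¹ - 1) ≠ 0 := by
    intro s hs
    obtain ⟨h1, h2⟩ := hs
    have hs0 : s ≠ 0 := by positivity
    have hsq : s^2 < 1 := by nlinarith
    have hsqpos : 0 < s^2 := by positivity
    have : (1:ℝ) < (s^2)⁻¹ := (one_lt_inv₀ hsqpos).mpr hsq
    exact ⟨hs0, by linarith, by linarith, by linarith⟩
  -- the difference function is constant
  set φ : ℝ → ℝ := fun s => ((s^2)⁻¹ - 1)⁻¹ * ζ s - Gfull s with hφdef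
  have hφ : ∀ s ∈ I, HasDerivAt φ 0 s := by
    intro s hs
    obtain ⟨hs0, hs1, hsp, he⟩ := hfacts s hs
    have := (hode s (Or.inl hs)).sub (hasDerivAt_Gfull hs0 hs1 hsp he)
    simp at this
    exact this
  have hconv : Convex ℝ I := convex_Ioo _ _
  have hmem : (3/4 : ℝ) ∈ I := by constructor <;> norm_num
  set C : ℝ := φ (3/4) with hC
  have hconst : ∀ s ∈ I, φ s = C := by
    intro s hs
    refine hconv.is_const_of_fderivWithin_eq_zero
      (fun x hx => ((hφ x hx).differentiableAt).differentiableWithinAt) ?_ hs hmem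
    intro x hx
    rw [fderivWithin_of_isOpen isOpen_Ioo hx, (hφ x hx).hasFDerivAt.fderiv]
    ext y; simp
  -- explicit formula for ζ on I
  have hζeq : ∀ s ∈ I, ζ s = ((s^2)⁻¹ - 1) * (Gsmooth s + C) - (7/8)*((1+s)/s^2) := by
    intro s hs
    obtain ⟨hs0, hs1, hsp, he⟩ := hfacts s hs
    have h1 : ((s^2)⁻¹ - 1)⁻¹ * ζ s = Gfull s + C := by
      have := hconst s hs; rw [hφdef] at this; simp only at this; linarith
    have h2 : ζ s = ((s^2)⁻¹ - 1) * (Gfull s + C) := by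
      rw [← h1, ← mul_assoc, mul_inv_cancel₀ he, one_mul]
    rw [h2, Gfull]
    have hkey : ((s^2)⁻¹ - 1) * ((7/8)*(1-s)⁻¹) = (7/8)*((1+s)/s^2) := by
      rw [show ((s^2)⁻¹ - 1) = (1-s)*(1+s)/s^2 by field_simp; ring]
      field_simp
    ring_nf
    ring_nf at hkey
    linarith
  -- the extension H is continuous at 1
  set H : ℝ → ℝ := fun s => ((s^2)⁻¹ - 1) * (Gsmooth s + C) - (7/8)*((1+s)/s^2) with hHdef
  have hHcont : ContinuousAt H 1 := by
    have h2 : (1:ℝ) + 1 ≠ 0 := by norm_num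
    have hGs : ContinuousAt Gsmooth 1 := by
      unfold Gsmooth
      fun_prop (disch := norm_num)
    unfold H
    fun_prop (disch := norm_num)
  have hH1 : H 1 = -7/4 := by
    simp only [hHdef]
    norm_num
  -- limits from the left
  have hne : (𝓝[<] (1:ℝ)).NeBot := inferInstance
  have hmemI : I ∈ 𝓝[<] (1:ℝ) := Ioo_mem_nhdsLT_of_mem (by constructor <;> norm_num)
  have h1 : Filter.Tendsto ζ (𝓝[<] (1:ℝ)) (𝓝 (ζ 1)) :=
    hcont.tendsto.mono_left nhdsWithin_le_nhds
  have h2 : Filter.Tendsto ζ (𝓝[<] (1:ℝ)) (𝓝 (-7/4)) := by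
    rw [← hH1]
    refine Filter.Tendsto.congr' ?_ (hHcont.tendsto.mono_left nhdsWithin_le_nhds)
    filter_upwards [hmemI] with s hs
    exact (hζeq s hs).symm
  exact tendsto_nhds_unique h1 h2
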